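/- arXiv:math/0309074 — 2 statements merged into one kernel-verified Lean document; each statement's English description precedes it below -/
import Mathlib

section
/- For every integer N ≥ 0, the sum of (dim λ)² over all partitions λ with |λ| = N equals N!. -/
open Filter Topology
open scoped Classical

/-- A partition: a nonincreasing sequence of nonnegative integers with only
finitely many nonzero terms.  `part i` is the `(i+1)`-st part `λ_{i+1}`. -/
structure PartitionSeq : Type where
  part : ℕ → ℕ
  antitone' : ∀ ⦃i j : ℕ⦄, i ≤ j → part j ≤ part i
  finite_support : ∃ N : ℕ, ∀ i : ℕ, N ≤ i → part i = 0

/-- The size `|λ| = Σᵢ λᵢ` of a partition. -/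
noncomputable def PartitionSeq.size (μ : PartitionSeq) : ℕ := ∑' i : ℕ, μ.part i

/-- `c : ℕ → PartitionSeq` is a standard-Young-tableau chain for `μ`:
`∅ = c 0 ⊂ c 1 ⊂ ⋯ ⊂ c |μ| = μ`, each step adding a single box
(i.e. the diagrams grow and the size increases by one at each step),
and `c` is frozen at `μ` from step `|μ|` on. -/
def IsSYTChain (μ : PartitionSeq) (c : ℕ → PartitionSeq) : Prop :=
  (∀ i : ℕ, (c 0).part i = 0) ∧
  (∀ k : ℕ, μ.size ≤ k → c k = μ) ∧
  (∀ k : ℕ, k < μ.size →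
    (∀ i : ℕ, (c k).part i ≤ (c (k + 1)).part i) ∧ (c (k + 1)).size = (c k).size + 1)

/-- `dim λ`: the number of standard Young tableaux of shape `λ`. -/
noncomputable def dimSYT (μ : PartitionSeq) : ℕ :=
  Set.ncard {c : ℕ → PartitionSeq | IsSYTChain μ c}

/-- The set `𝔖(λ) = {λᵢ - i + 1/2 : i ≥ 1} ⊂ ℤ + 1/2`, encoded by the integer
parts: a half-integer `k + 1/2` is represented by `k : ℤ`, so the set is
`{λᵢ - i : i ≥ 1}`. -/
def PartitionSeq.frontierSet (μ : PartitionSeq) : Set ℤ :=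
  {k : ℤ | ∃ i : ℕ, (μ.part i : ℤ) - (i + 1) = k}


namespace PartitionSeq

lemma ext' {μ ν : PartitionSeq} (h : ∀ i, μ.part i = ν.part i) : μ = ν := by
  cases μ; cases ν; simp only [mk.injEq]; funext i; exact h i

lemma size_eq_sum (μ : PartitionSeq) {M : ℕ} (h : ∀ i, M ≤ i → μ.part i = 0) :
    μ.size = ∑ i ∈ Finset.range M, μ.part i := by
  refine tsum_eq_sum ?_
  intro b hb
  exact h b (by simpa using hb)

lemma lt_size_of_part_pos {μ : PartitionSeq} {i : ℕ} (h : μ.part i ≠ 0) : i < μ.size := by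
  obtain ⟨M, hM⟩ := μ.finite_support
  have hsum := μ.size_eq_sum (M := max M (i+1)) (fun j hj => hM j (le_trans (le_max_left _ _) hj))
  have h1 : ∀ j ∈ Finset.range (i+1), 1 ≤ μ.part j := by
    intro j hj
    have := μ.antitone' (Nat.lt_succ_iff.mp (Finset.mem_range.mp hj))
    omega
  have h2 : (i+1) ≤ ∑ j ∈ Finset.range (i+1), μ.part j := by
    calc (i+1) = ∑ _j ∈ Finset.range (i+1), 1 := by simp
    _ ≤ _ := Finset.sum_le_sum h1
  have h3 : ∑ j ∈ Finset.range (i+1), μ.part j ≤ ∑ j ∈ Finset.range (max M (i+1)), μ.part j :=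
    Finset.sum_le_sum_of_subset (Finset.range_subset_range.mpr (le_max_right _ _))
  omega

lemma part_eq_zero_of_size_le {μ : PartitionSeq} {i : ℕ} (h : μ.size ≤ i) : μ.part i = 0 := by
  by_contra hc
  exact absurd (lt_size_of_part_pos hc) (by omega)

lemma size_eq_sum_range_size (μ : PartitionSeq) :
    μ.size = ∑ i ∈ Finset.range μ.size, μ.part i :=
  μ.size_eq_sum (fun _ hj => part_eq_zero_of_size_le hj)

lemma part_le_size (μ : PartitionSeq) (i : ℕ) : μ.part i ≤ μ.size := by
  rcases Nat.eq_zero_or_pos (μ.part i) with h | h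
  · omega
  · have hi : i < μ.size := lt_size_of_part_pos (by omega)
    rw [μ.size_eq_sum_range_size]
    exact Finset.single_le_sum (f := μ.part) (fun _ _ => Nat.zero_le _) (Finset.mem_range.mpr hi)

lemma size_zero_iff {μ : PartitionSeq} : μ.size = 0 ↔ ∀ i, μ.part i = 0 := by
  constructor
  · intro h i; exact part_eq_zero_of_size_le (by omega)
  · intro h
    rw [μ.size_eq_sum (M := 0) (fun i _ => h i)]; simp

/-- partitions of size at most n form a finite set -/
lemma finite_size_le (n : ℕ) : {μ : PartitionSeq | μ.size ≤ n}.Finite := by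
  have : Set.InjOn (fun μ : PartitionSeq => fun i : Fin (n+1) => μ.part i)
      {μ : PartitionSeq | μ.size ≤ n} := by
    intro μ hμ ν hν h
    refine ext' (fun i => ?_)
    rcases lt_or_ge i (n+1) with hi | hi
    · exact congrFun h ⟨i, hi⟩
    · rw [part_eq_zero_of_size_le (by simp at hμ; omega),
        part_eq_zero_of_size_le (by simp at hν; omega)]
  have hfin : ((fun μ : PartitionSeq => fun i : Fin (n+1) => μ.part i) ''
      {μ : PartitionSeq | μ.size ≤ n}).Finite := by
    apply Set.Finite.subset (Set.finite_Iic (fun _ : Fin (n+1) => n))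
    rintro g ⟨μ, hμ, rfl⟩
    intro i
    exact le_trans (μ.part_le_size i) hμ
  exact Set.Finite.of_finite_image hfin this

lemma finite_size_eq (n : ℕ) : {μ : PartitionSeq | μ.size = n}.Finite :=
  (finite_size_le n).subset (fun μ h => le_of_eq h)



section
variable {α : Type*}

lemma sum_eq_one_helper {s : Finset ℕ} {f : ℕ → ℕ} (h : ∑ i ∈ s, f i = 1) :
    ∃ a ∈ s, f a = 1 ∧ ∀ b ∈ s, b ≠ a → f b = 0 := by
  have : ∃ a ∈ s, f a ≠ 0 := by
    by_contra hc
    push_neg at hc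
    rw [Finset.sum_eq_zero hc] at h; omega
  obtain ⟨a, ha, hfa⟩ := this
  have hsplit := Finset.add_sum_erase s f ha
  have hrest : ∑ b ∈ s.erase a, f b = 0 := by omega
  refine ⟨a, ha, by omega, fun b hb hba => ?_⟩
  exact (Finset.sum_eq_zero_iff).mp hrest b (Finset.mem_erase.mpr ⟨hba, hb⟩)

end

/-- `ν ⋖ μ` : `μ` is obtained from `ν` by adding one box. -/
def Covers (ν μ : PartitionSeq) : Prop :=
  (∀ i, ν.part i ≤ μ.part i) ∧ μ.size = ν.size + 1

def Addable (μ : PartitionSeq) (a : ℕ) : Prop := ∀ j < a, μ.part a < μ.part j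

def Removable (μ : PartitionSeq) (r : ℕ) : Prop := μ.part (r+1) < μ.part r

lemma addable_succ_iff_removable {μ : PartitionSeq} {i : ℕ} :
    Addable μ (i+1) ↔ Removable μ i := by
  constructor
  · intro h; exact h i (by omega)
  · intro h j hj
    exact lt_of_lt_of_le h (μ.antitone' (by omega))

lemma addable_zero (μ : PartitionSeq) : Addable μ 0 := fun j hj => by omega


noncomputable def addBox (μ : PartitionSeq) (a : ℕ) (h : Addable μ a) : PartitionSeq where
  part := fun j => μ.part j + if j = a then 1 else 0
  antitone' := by
    intro i j hij
    rcases eq_or_lt_of_le hij with rfl | hlt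
    · exact le_rfl
    · have h1 : μ.part j ≤ μ.part i := μ.antitone' hij
      by_cases hja : j = a
      · have h2 : μ.part a < μ.part i := h i (by omega)
        rw [if_pos hja, hja]
        split <;> omega
      · rw [if_neg hja]
        split <;> omega
  finite_support := by
    obtain ⟨M, hM⟩ := μ.finite_support
    exact ⟨max M (a+1), fun i hi => by
      rw [hM i (le_trans (le_max_left _ _) hi), if_neg (by omega)]⟩

lemma addBox_part (μ : PartitionSeq) (a : ℕ) (h : Addable μ a) (j : ℕ) :
    (μ.addBox a h).part j = μ.part j + if j = a then 1 else 0 := by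
  simp only [addBox]

lemma size_addBox (μ : PartitionSeq) (a : ℕ) (h : Addable μ a) :
    (μ.addBox a h).size = μ.size + 1 := by
  set M := μ.size + a + 1 with hMdef
  have hvan : ∀ i, M ≤ i → (μ.addBox a h).part i = 0 := by
    intro i hi
    rw [addBox_part, part_eq_zero_of_size_le (by omega), if_neg (by omega)]
  rw [size_eq_sum _ hvan, μ.size_eq_sum (M := M) (fun i hi => part_eq_zero_of_size_le (by omega))]
  simp only [addBox_part, Finset.sum_add_distrib]
  rw [Finset.sum_ite_eq' (Finset.range M) a (fun _ => 1), if_pos (Finset.mem_range.mpr (by omega))]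

noncomputable def removeBox (μ : PartitionSeq) (r : ℕ) (h : Removable μ r) : PartitionSeq where
  part := fun j => μ.part j - if j = r then 1 else 0
  antitone' := by
    intro i j hij
    rcases eq_or_lt_of_le hij with rfl | hlt
    · exact le_rfl
    · have h1 : μ.part j ≤ μ.part i := μ.antitone' hij
      by_cases hir : i = r
      · have h2 : μ.part j ≤ μ.part (r+1) := μ.antitone' (by omega)
        have h3 : μ.part (r+1) < μ.part r := h
        rw [if_neg (by omega : ¬ (j = r)), if_pos hir, hir]
        omega
      · rw [if_neg hir]
        split <;> omega
  finite_support := by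
    obtain ⟨M, hM⟩ := μ.finite_support
    exact ⟨M, fun i hi => by rw [hM i hi]; omega⟩

lemma removeBox_part (μ : PartitionSeq) (r : ℕ) (h : Removable μ r) (j : ℕ) :
    (μ.removeBox r h).part j = μ.part j - if j = r then 1 else 0 := by
  simp only [removeBox]

lemma part_removeBox_add (μ : PartitionSeq) (r : ℕ) (h : Removable μ r) (j : ℕ) :
    μ.part j = (μ.removeBox r h).part j + if j = r then 1 else 0 := by
  have hr1 : 1 ≤ μ.part r := by have : μ.part (r+1) < μ.part r := h; omega
  rw [removeBox_part]
  by_cases hj : j = r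
  · simp only [if_pos hj]; rw [hj]; omega
  · simp only [if_neg hj]; omega

lemma size_removeBox (μ : PartitionSeq) (r : ℕ) (h : Removable μ r) :
    (μ.removeBox r h).size + 1 = μ.size := by
  set M := μ.size + r + 1 with hMdef
  have hvan : ∀ i, M ≤ i → (μ.removeBox r h).part i = 0 := by
    intro i hi
    rw [removeBox_part, part_eq_zero_of_size_le (by omega)]; omega
  rw [size_eq_sum _ hvan, μ.size_eq_sum (M := M) (fun i hi => part_eq_zero_of_size_le (by omega))]
  have hc : ∑ i ∈ Finset.range M, μ.part i
      = ∑ i ∈ Finset.range M, ((μ.removeBox r h).part i + if i = r then 1 else 0) :=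
    Finset.sum_congr rfl (fun j _ => part_removeBox_add μ r h j)
  rw [hc, Finset.sum_add_distrib,
    Finset.sum_ite_eq' (Finset.range M) r (fun _ => 1), if_pos (Finset.mem_range.mpr (by omega))]

lemma covers_addBox (μ : PartitionSeq) (a : ℕ) (h : Addable μ a) :
    Covers μ (μ.addBox a h) :=
  ⟨fun i => by rw [addBox_part]; omega, size_addBox μ a h⟩

lemma covers_removeBox (μ : PartitionSeq) (r : ℕ) (h : Removable μ r) :
    Covers (μ.removeBox r h) μ :=
  ⟨fun i => by rw [removeBox_part]; omega, (size_removeBox μ r h).symm⟩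

/-- one-box difference extraction -/
lemma covers_exists_index {ν μ : PartitionSeq} (h : Covers ν μ) :
    ∃ a, μ.part a = ν.part a + 1 ∧ ∀ j, j ≠ a → μ.part j = ν.part j := by
  obtain ⟨hle, hs⟩ := h
  set M := μ.size with hM
  have hvμ : ∀ i, M ≤ i → μ.part i = 0 := fun i hi => part_eq_zero_of_size_le hi
  have hvν : ∀ i, M ≤ i → ν.part i = 0 := by
    intro i hi
    have := hle i
    have := hvμ i hi
    omega
  have e1 := μ.size_eq_sum hvμ
  have e2 := ν.size_eq_sum hvν
  have key : ∑ i ∈ Finset.range M, μ.part i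
      = ∑ i ∈ Finset.range M, ν.part i + ∑ i ∈ Finset.range M, (μ.part i - ν.part i) := by
    rw [← Finset.sum_add_distrib]
    exact Finset.sum_congr rfl (fun i _ => by have := hle i; omega)
  have h1 : ∑ i ∈ Finset.range M, (μ.part i - ν.part i) = 1 := by omega
  obtain ⟨a, ha, hfa, hrest⟩ := sum_eq_one_helper h1
  refine ⟨a, by have := hle a; omega, fun j hj => ?_⟩
  rcases lt_or_ge j M with hjM | hjM
  · have := hrest j (Finset.mem_range.mpr hjM) hj
    have := hle j
    omega
  · rw [hvμ j hjM, hvν j hjM]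

lemma covers_iff_addBox {ν μ : PartitionSeq} :
    Covers ν μ ↔ ∃ a, ∃ h : Addable ν a, μ = ν.addBox a h := by
  constructor
  · intro h
    obtain ⟨a, ha, hother⟩ := covers_exists_index h
    have hadd : Addable ν a := by
      intro j hj
      have h2 : μ.part a ≤ μ.part j := μ.antitone' (le_of_lt hj)
      have := hother j (by omega)
      omega
    refine ⟨a, hadd, ext' (fun j => ?_)⟩
    rw [addBox_part]
    by_cases hj : j = a
    · rw [if_pos hj, hj]; omega
    · rw [if_neg hj, hother j hj]; omega
  · rintro ⟨a, h, rfl⟩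
    exact covers_addBox ν a h

lemma covers_iff_removeBox {ν μ : PartitionSeq} :
    Covers ν μ ↔ ∃ r, ∃ h : Removable μ r, ν = μ.removeBox r h := by
  constructor
  · intro h
    obtain ⟨a, ha, hother⟩ := covers_exists_index h
    have hrem : Removable μ a := by
      have h1 : ν.part (a+1) ≤ ν.part a := ν.antitone' (by omega)
      have := hother (a+1) (by omega)
      show μ.part (a+1) < μ.part a
      omega
    refine ⟨a, hrem, ext' (fun j => ?_)⟩
    rw [removeBox_part]
    by_cases hj : j = a
    · rw [if_pos hj, hj]; omega
    · rw [if_neg hj, hother j hj]; omega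
  · rintro ⟨r, h, rfl⟩
    exact covers_removeBox μ r h


lemma finite_up (l : PartitionSeq) : {μ : PartitionSeq | Covers l μ}.Finite :=
  (finite_size_eq (l.size+1)).subset (fun _ hμ => hμ.2)

lemma finite_down (l : PartitionSeq) : {ν : PartitionSeq | Covers ν l}.Finite := by
  apply (finite_size_le l.size).subset
  intro ν hν
  have := hν.2
  simp only [Set.mem_setOf_eq]
  omega

noncomputable def up (l : PartitionSeq) : Finset PartitionSeq := (finite_up l).toFinset

noncomputable def down (l : PartitionSeq) : Finset PartitionSeq := (finite_down l).toFinset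

lemma mem_up {l μ : PartitionSeq} : μ ∈ up l ↔ Covers l μ := Set.Finite.mem_toFinset _

lemma mem_down {l ν : PartitionSeq} : ν ∈ down l ↔ Covers ν l := Set.Finite.mem_toFinset _

lemma addable_le_size {l : PartitionSeq} {a : ℕ} (h : Addable l a) : a ≤ l.size := by
  cases a with
  | zero => omega
  | succ i =>
    have h1 : l.part (i+1) < l.part i := h i (by omega)
    have := lt_size_of_part_pos (μ := l) (i := i) (by omega)
    omega

lemma removable_lt_size {l : PartitionSeq} {r : ℕ} (h : Removable l r) : r < l.size := by
  have : l.part (r+1) < l.part r := h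
  exact lt_size_of_part_pos (by omega)

noncomputable def addSet (l : PartitionSeq) : Finset ℕ :=
  (Finset.range (l.size+1)).filter (Addable l)

noncomputable def remSet (l : PartitionSeq) : Finset ℕ :=
  (Finset.range (l.size+1)).filter (Removable l)

lemma mem_addSet {l : PartitionSeq} {a : ℕ} : a ∈ addSet l ↔ Addable l a := by
  simp only [addSet, Finset.mem_filter, Finset.mem_range]
  exact ⟨fun h => h.2, fun h => ⟨by have := addable_le_size h; omega, h⟩⟩

lemma mem_remSet {l : PartitionSeq} {r : ℕ} : r ∈ remSet l ↔ Removable l r := by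
  simp only [remSet, Finset.mem_filter, Finset.mem_range]
  exact ⟨fun h => h.2, fun h => ⟨by have := removable_lt_size h; omega, h⟩⟩

lemma card_up (l : PartitionSeq) : (up l).card = (addSet l).card := by
  refine (Finset.card_bij (fun a ha => l.addBox a (mem_addSet.mp ha)) ?_ ?_ ?_).symm
  · intro a ha
    exact mem_up.mpr (covers_addBox l a (mem_addSet.mp ha))
  · intro a ha b hb hab
    by_contra hne
    have h1 := congrArg (fun μ => μ.part a) hab
    simp only [addBox_part, if_neg hne, if_true] at h1
    omega
  · intro μ hμ
    obtain ⟨a, h, rfl⟩ := covers_iff_addBox.mp (mem_up.mp hμ)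
    exact ⟨a, mem_addSet.mpr h, rfl⟩

lemma card_down (l : PartitionSeq) : (down l).card = (remSet l).card := by
  refine (Finset.card_bij (fun r hr => l.removeBox r (mem_remSet.mp hr)) ?_ ?_ ?_).symm
  · intro r hr
    exact mem_down.mpr (covers_removeBox l r (mem_remSet.mp hr))
  · intro a ha b hb hab
    by_contra hne
    have h1 := congrArg (fun μ => μ.part a) hab
    have ha1 : 1 ≤ l.part a := by
      have : l.part (a+1) < l.part a := mem_remSet.mp ha
      omega
    simp only [removeBox_part, if_neg hne, if_true] at h1
    omega
  · intro ν hν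
    obtain ⟨r, h, rfl⟩ := covers_iff_removeBox.mp (mem_down.mp hν)
    exact ⟨r, mem_remSet.mpr h, rfl⟩

lemma addSet_eq (l : PartitionSeq) : addSet l = insert 0 ((remSet l).image Nat.succ) := by
  ext a
  simp only [Finset.mem_insert, Finset.mem_image]
  constructor
  · intro ha
    cases a with
    | zero => exact Or.inl rfl
    | succ i =>
      refine Or.inr ⟨i, mem_remSet.mpr ?_, rfl⟩
      exact addable_succ_iff_removable.mp (mem_addSet.mp ha)
  · rintro (rfl | ⟨r, hr, rfl⟩)
    · exact mem_addSet.mpr (addable_zero l)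
    · exact mem_addSet.mpr (addable_succ_iff_removable.mpr (mem_remSet.mp hr))

lemma card_up_eq (l : PartitionSeq) : (up l).card = (down l).card + 1 := by
  rw [card_up, card_down, addSet_eq,
    Finset.card_insert_of_notMem (by simp), Finset.card_image_of_injective _ Nat.succ_injective]


lemma ncard_biUnion_helper {α β : Type*} {s : Finset α} {t : α → Set β}
    (hfin : ∀ i ∈ s, (t i).Finite)
    (hdisj : ∀ i ∈ s, ∀ j ∈ s, i ≠ j → Disjoint (t i) (t j)) :
    (⋃ i ∈ s, t i).ncard = ∑ i ∈ s, (t i).ncard := by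
  classical
  induction s using Finset.induction_on with
  | empty => simp
  | @insert a s ha ih =>
    rw [Finset.set_biUnion_insert, Finset.sum_insert ha]
    have hdisj2 : Disjoint (t a) (⋃ i ∈ s, t i) := by
      rw [Set.disjoint_iUnion₂_right]
      intro i hi
      exact hdisj a (Finset.mem_insert_self a s) i (Finset.mem_insert_of_mem hi)
        (fun h => ha (h ▸ hi))
    rw [Set.ncard_union_eq hdisj2 (hfin a (Finset.mem_insert_self a s))
      (Set.Finite.biUnion s.finite_toSet (fun i hi => hfin i (Finset.mem_insert_of_mem hi))),
      ih (fun i hi => hfin i (Finset.mem_insert_of_mem hi))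
        (fun i hi j hj hij => hdisj i (Finset.mem_insert_of_mem hi) j (Finset.mem_insert_of_mem hj) hij)]

lemma chain_size {μ : PartitionSeq} {c : ℕ → PartitionSeq} (hc : IsSYTChain μ c) :
    ∀ k, k ≤ μ.size → (c k).size = k := by
  intro k
  induction k with
  | zero => intro _; exact size_zero_iff.mpr hc.1
  | succ m ih =>
    intro hm
    have h1 := (hc.2.2 m (by omega)).2
    rw [h1, ih (by omega)]

lemma finite_chainSet (μ : PartitionSeq) : {c : ℕ → PartitionSeq | IsSYTChain μ c}.Finite := by
  set n := μ.size with hn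
  have hsub : (fun c : ℕ → PartitionSeq => fun k : Fin (n+1) => c k) '' {c | IsSYTChain μ c}
      ⊆ Set.pi Set.univ (fun _ : Fin (n+1) => {p : PartitionSeq | p.size ≤ n}) := by
    rintro g ⟨c, hc, rfl⟩
    intro k _
    have hk : (k : ℕ) ≤ n := by omega
    have := chain_size hc k hk
    simp only [Set.mem_setOf_eq]
    omega
  have hinj : Set.InjOn (fun c : ℕ → PartitionSeq => fun k : Fin (n+1) => c k)
      {c | IsSYTChain μ c} := by
    intro c hc c' hc' h
    funext k
    rcases le_or_gt k n with hk | hk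
    · exact congrFun h ⟨k, by omega⟩
    · rw [hc.2.1 k (by omega), hc'.2.1 k (by omega)]
  exact Set.Finite.of_finite_image
    ((Set.Finite.pi (fun _ => finite_size_le n)).subset hsub) hinj

lemma dimSYT_empty {μ : PartitionSeq} (h : μ.size = 0) : dimSYT μ = 1 := by
  have hset : {c : ℕ → PartitionSeq | IsSYTChain μ c} = {fun _ => μ} := by
    ext c
    simp only [Set.mem_setOf_eq, Set.mem_singleton_iff]
    constructor
    · intro hc
      funext k
      exact hc.2.1 k (by omega)
    · rintro rfl
      exact ⟨fun i => size_zero_iff.mp h i, fun k _ => rfl, fun k hk => absurd hk (by omega)⟩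
  rw [dimSYT, hset, Set.ncard_singleton]

lemma dimSYT_rec {μ : PartitionSeq} (h : 1 ≤ μ.size) :
    dimSYT μ = ∑ ν ∈ down μ, dimSYT ν := by
  obtain ⟨n, hn⟩ : ∃ n, μ.size = n + 1 := ⟨μ.size - 1, by omega⟩
  set A : PartitionSeq → Set (ℕ → PartitionSeq) := fun ν => {c | IsSYTChain μ c ∧ c n = ν} with hA
  have hAfin : ∀ ν, (A ν).Finite := fun ν => (finite_chainSet μ).subset (fun c hc => hc.1)
  have hunion : {c : ℕ → PartitionSeq | IsSYTChain μ c} = ⋃ ν ∈ down μ, A ν := by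
    ext c
    simp only [Set.mem_setOf_eq, Set.mem_iUnion, exists_prop, hA]
    constructor
    · intro hc
      refine ⟨c n, ?_, hc, rfl⟩
      apply mem_down.mpr
      have hstep := hc.2.2 n (by omega)
      have hcn1 : c (n+1) = μ := hc.2.1 (n+1) (by omega)
      constructor
      · intro i; have := hstep.1 i; rwa [hcn1] at this
      · rw [chain_size hc n (by omega)]; omega
    · rintro ⟨ν, hν, hc, _⟩; exact hc
  have hdisj : ∀ ν ∈ down μ, ∀ ν' ∈ down μ, ν ≠ ν' → Disjoint (A ν) (A ν') := by
    intro ν _ ν' _ hne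
    refine Set.disjoint_left.mpr ?_
    rintro c ⟨_, h1⟩ ⟨_, h2⟩
    exact hne (by rw [← h1, h2])
  have hfiber : ∀ ν ∈ down μ, (A ν).ncard = dimSYT ν := by
    intro ν hν
    have hcov := mem_down.mp hν
    have hνsize : ν.size = n := by have := hcov.2; omega
    set r : (ℕ → PartitionSeq) → (ℕ → PartitionSeq) := fun c k => c (min k n) with hr
    have hinj : Set.InjOn r (A ν) := by
      intro c hc c' hc' hcc
      funext k
      rcases le_or_gt k n with hk | hk
      · have h2 := congrFun hcc k
        simpa only [hr, min_eq_left hk] using h2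
      · rw [hc.1.2.1 k (by omega), hc'.1.2.1 k (by omega)]
    have himg : r '' A ν = {c | IsSYTChain ν c} := by
      ext c'
      simp only [Set.mem_image, Set.mem_setOf_eq, hA]
      constructor
      · rintro ⟨c, ⟨hc, hcn⟩, rfl⟩
        refine ⟨?_, ?_, ?_⟩
        · intro i
          have h0 : min 0 n = 0 := by omega
          simpa only [hr, h0] using hc.1 i
        · intro k hk
          have hkn : min k n = n := by omega
          simp only [hr, hkn, hcn]
        · intro k hk
          have hkn : k < n := by omega
          have hstep := hc.2.2 k (by omega)
          have e1 : min k n = k := by omega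
          have e2 : min (k+1) n = k + 1 := by omega
          constructor
          · intro i
            simpa only [hr, e1, e2] using hstep.1 i
          · simp only [hr, e1, e2]
            exact hstep.2
      · intro hc'
        set c : ℕ → PartitionSeq := fun k => if k ≤ n then c' k else μ with hcdef
        have hle : ∀ k, k ≤ n → c k = c' k := by
          intro k hk; simp only [hcdef]; rw [if_pos hk]
        have hgt : ∀ k, n < k → c k = μ := by
          intro k hk; simp only [hcdef]; rw [if_neg (by omega)]
        have hcν : c n = ν := by rw [hle n le_rfl]; exact hc'.2.1 n (by omega)
        refine ⟨c, ⟨⟨?_, ?_, ?_⟩, hcν⟩, ?_⟩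
        · rw [hle 0 (Nat.zero_le n)]; exact hc'.1
        · intro k hk; exact hgt k (by omega)
        · intro k hk
          rcases lt_or_ge k n with hkn | hkn
          · rw [hle k (by omega), hle (k+1) (by omega)]
            exact hc'.2.2 k (by omega)
          · have hkeq : k = n := by omega
            subst hkeq
            rw [hle k le_rfl, hgt (k+1) (by omega), hc'.2.1 k (by omega)]
            exact ⟨hcov.1, hcov.2⟩
        · funext k
          simp only [hr]
          rcases le_or_gt k n with hk | hk
          · rw [min_eq_left hk, hle k hk]
          · rw [min_eq_right (by omega), hle n le_rfl,
              hc'.2.1 n (by omega), hc'.2.1 k (by omega)]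
    calc (A ν).ncard = (r '' A ν).ncard := (Set.ncard_image_of_injOn hinj).symm
    _ = dimSYT ν := by rw [himg, dimSYT]
  rw [dimSYT, hunion, ncard_biUnion_helper (fun ν _ => hAfin ν) hdisj]
  exact Finset.sum_congr rfl hfiber


noncomputable def pmin (l v : PartitionSeq) : PartitionSeq where
  part := fun i => min (l.part i) (v.part i)
  antitone' := by
    intro i j hij
    have h1 := l.antitone' hij
    have h2 := v.antitone' hij
    omega
  finite_support := by
    obtain ⟨M, hM⟩ := l.finite_support
    exact ⟨M, fun i hi => by rw [hM i hi]; omega⟩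

noncomputable def pmax (l v : PartitionSeq) : PartitionSeq where
  part := fun i => max (l.part i) (v.part i)
  antitone' := by
    intro i j hij
    have h1 := l.antitone' hij
    have h2 := v.antitone' hij
    omega
  finite_support := by
    obtain ⟨M, hM⟩ := l.finite_support
    obtain ⟨M', hM'⟩ := v.finite_support
    exact ⟨max M M', fun i hi => by
      rw [hM i (le_trans (le_max_left _ _) hi), hM' i (le_trans (le_max_right _ _) hi)]
      omega⟩

lemma pmin_part (l v : PartitionSeq) (i : ℕ) :
    (pmin l v).part i = min (l.part i) (v.part i) := rfl

lemma pmax_part (l v : PartitionSeq) (i : ℕ) :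
    (pmax l v).part i = max (l.part i) (v.part i) := rfl

lemma size_pmin_add_pmax (l v : PartitionSeq) :
    (pmin l v).size + (pmax l v).size = l.size + v.size := by
  have hvl : ∀ i, l.size + v.size ≤ i → l.part i = 0 :=
    fun i hi => part_eq_zero_of_size_le (by omega)
  have hvv : ∀ i, l.size + v.size ≤ i → v.part i = 0 :=
    fun i hi => part_eq_zero_of_size_le (by omega)
  have hv1 : ∀ i, l.size + v.size ≤ i → (pmin l v).part i = 0 := by
    intro i hi; rw [pmin_part, hvl i hi, hvv i hi]; omega
  have hv2 : ∀ i, l.size + v.size ≤ i → (pmax l v).part i = 0 := by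
    intro i hi; rw [pmax_part, hvl i hi, hvv i hi]; omega
  have e1 := size_eq_sum _ hv1
  have e2 := size_eq_sum _ hv2
  have e3 := l.size_eq_sum (M := l.size + v.size) hvl
  have e4 := v.size_eq_sum (M := l.size + v.size) hvv
  have key : ∑ i ∈ Finset.range (l.size + v.size), ((pmin l v).part i + (pmax l v).part i)
      = ∑ i ∈ Finset.range (l.size + v.size), (l.part i + v.part i) := by
    refine Finset.sum_congr rfl (fun i _ => ?_)
    rw [pmin_part, pmax_part]
    omega
  rw [Finset.sum_add_distrib, Finset.sum_add_distrib] at key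
  omega

lemma covers_pmax {p l v : PartitionSeq} (hl : Covers p l) (hv : Covers p v) (hne : l ≠ v) :
    Covers l (pmax l v) ∧ Covers v (pmax l v) ∧ pmin l v = p := by
  obtain ⟨a, ha, hoa⟩ := covers_exists_index hl
  obtain ⟨b, hb, hob⟩ := covers_exists_index hv
  have hab : a ≠ b := by
    rintro rfl
    apply hne
    apply ext'
    intro j
    by_cases hj : j = a
    · rw [hj]; omega
    · rw [hoa j hj, hob j hj]
  have hminp : pmin l v = p := by
    apply ext'
    intro j
    rw [pmin_part]
    by_cases hja : j = a
    · rw [hja, hob a hab]; omega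
    · by_cases hjb : j = b
      · rw [hjb, hoa b (Ne.symm hab)]; omega
      · rw [hoa j hja, hob j hjb]; omega
  have hsz := size_pmin_add_pmax l v
  rw [hminp] at hsz
  have h1 : l.size = p.size + 1 := hl.2
  have h2 : v.size = p.size + 1 := hv.2
  exact ⟨⟨fun i => by rw [pmax_part]; omega, by omega⟩,
         ⟨fun i => by rw [pmax_part]; omega, by omega⟩, hminp⟩

lemma covers_pmin {l v μ : PartitionSeq} (hl : Covers l μ) (hv : Covers v μ) (hne : l ≠ v) :
    Covers (pmin l v) l ∧ Covers (pmin l v) v ∧ pmax l v = μ := by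
  obtain ⟨a, ha, hoa⟩ := covers_exists_index hl
  obtain ⟨b, hb, hob⟩ := covers_exists_index hv
  have hab : a ≠ b := by
    rintro rfl
    apply hne
    apply ext'
    intro j
    by_cases hj : j = a
    · rw [hj]; omega
    · have e1 := hoa j hj
      have e2 := hob j hj
      omega
  have hmax : pmax l v = μ := by
    apply ext'
    intro j
    rw [pmax_part]
    by_cases hja : j = a
    · rw [hja]
      have e2 := hob a hab
      omega
    · by_cases hjb : j = b
      · rw [hjb]
        have e1 := hoa b (Ne.symm hab)
        omega
      · have e1 := hoa j hja
        have e2 := hob j hjb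
        omega
  have hsz := size_pmin_add_pmax l v
  rw [hmax] at hsz
  have h1 : μ.size = l.size + 1 := hl.2
  have h2 : μ.size = v.size + 1 := hv.2
  exact ⟨⟨fun i => by rw [pmin_part]; omega, by omega⟩,
         ⟨fun i => by rw [pmin_part]; omega, by omega⟩, hmax⟩

lemma up_sum : ∀ (n : ℕ) (l : PartitionSeq), l.size = n →
    ∑ μ ∈ up l, dimSYT μ = (l.size + 1) * dimSYT l := by
  intro n
  induction n using Nat.strong_induction_on with
  | _ n ih =>
    intro l hln
    set dl := dimSYT l with hdl
    have hrec : ∀ μ ∈ up l, dimSYT μ = ∑ ν ∈ (down μ).erase l, dimSYT ν + dl := by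
      intro μ hμ
      have hcov := mem_up.mp hμ
      have h1 : 1 ≤ μ.size := by have := hcov.2; omega
      rw [dimSYT_rec h1, ← Finset.sum_erase_add (down μ) _ (mem_down.mpr hcov)]
    have key1 : ∑ μ ∈ up l, dimSYT μ
        = (∑ μ ∈ up l, ∑ ν ∈ (down μ).erase l, dimSYT ν) + (up l).card * dl := by
      calc ∑ μ ∈ up l, dimSYT μ
          = ∑ μ ∈ up l, (∑ ν ∈ (down μ).erase l, dimSYT ν + dl) :=
            Finset.sum_congr rfl hrec
        _ = _ := by rw [Finset.sum_add_distrib, Finset.sum_const, smul_eq_mul]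
    have key2 : (∑ μ ∈ up l, ∑ ν ∈ (down μ).erase l, dimSYT ν)
        = ∑ ρ ∈ down l, ∑ ν ∈ (up ρ).erase l, dimSYT ν := by
      rw [Finset.sum_sigma' (up l) (fun μ => (down μ).erase l) (fun _ ν => dimSYT ν),
          Finset.sum_sigma' (down l) (fun ρ => (up ρ).erase l) (fun _ ν => dimSYT ν)]
      refine Finset.sum_nbij' (i := fun x => ⟨pmin l x.2, x.2⟩)
        (j := fun x => ⟨pmax l x.2, x.2⟩) ?_ ?_ ?_ ?_ ?_
      · rintro ⟨μ, ν⟩ hx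
        simp only [Finset.mem_sigma, Finset.mem_erase] at hx ⊢
        obtain ⟨hμ, hνne, hνd⟩ := hx
        obtain ⟨c1, c2, _⟩ := covers_pmin (mem_up.mp hμ) (mem_down.mp hνd) (Ne.symm hνne)
        exact ⟨mem_down.mpr c1, hνne, mem_up.mpr c2⟩
      · rintro ⟨ρ, ν⟩ hx
        simp only [Finset.mem_sigma, Finset.mem_erase] at hx ⊢
        obtain ⟨hρ, hνne, hνu⟩ := hx
        obtain ⟨c1, c2, _⟩ := covers_pmax (mem_down.mp hρ) (mem_up.mp hνu) (Ne.symm hνne)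
        exact ⟨mem_up.mpr c1, hνne, mem_down.mpr c2⟩
      · rintro ⟨μ, ν⟩ hx
        simp only [Finset.mem_sigma, Finset.mem_erase] at hx
        obtain ⟨hμ, hνne, hνd⟩ := hx
        obtain ⟨_, _, c3⟩ := covers_pmin (mem_up.mp hμ) (mem_down.mp hνd) (Ne.symm hνne)
        simp only [c3]
      · rintro ⟨ρ, ν⟩ hx
        simp only [Finset.mem_sigma, Finset.mem_erase] at hx
        obtain ⟨hρ, hνne, hνu⟩ := hx
        obtain ⟨_, _, c3⟩ := covers_pmax (mem_down.mp hρ) (mem_up.mp hνu) (Ne.symm hνne)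
        simp only [c3]
      · rintro ⟨μ, ν⟩ _
        rfl
    have key3 : (∑ ρ ∈ down l, ∑ ν ∈ (up ρ).erase l, dimSYT ν) + (down l).card * dl
        = l.size * dl := by
      have e1 : ∀ ρ ∈ down l, ∑ ν ∈ (up ρ).erase l, dimSYT ν + dl = l.size * dimSYT ρ := by
        intro ρ hρ
        have hcov := mem_down.mp hρ
        rw [Finset.sum_erase_add (up ρ) _ (mem_up.mpr hcov)]
        have hρn : ρ.size < n := by have := hcov.2; omega
        rw [ih ρ.size hρn ρ rfl, hcov.2]
      calc (∑ ρ ∈ down l, ∑ ν ∈ (up ρ).erase l, dimSYT ν) + (down l).card * dl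
          = ∑ ρ ∈ down l, (∑ ν ∈ (up ρ).erase l, dimSYT ν + dl) := by
            rw [Finset.sum_add_distrib, Finset.sum_const, smul_eq_mul]
        _ = ∑ ρ ∈ down l, l.size * dimSYT ρ := Finset.sum_congr rfl e1
        _ = l.size * ∑ ρ ∈ down l, dimSYT ρ := by rw [Finset.mul_sum]
        _ = l.size * dl := by
            rcases Nat.eq_zero_or_pos l.size with h0 | h0
            · rw [h0, zero_mul, zero_mul]
            · rw [← dimSYT_rec h0]
    have hc : (up l).card * dl = (down l).card * dl + dl := by
      rw [card_up_eq l]; ring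
    have hexp : (l.size + 1) * dl = l.size * dl + dl := by ring
    calc ∑ μ ∈ up l, dimSYT μ
        = (∑ μ ∈ up l, ∑ ν ∈ (down μ).erase l, dimSYT ν) + (up l).card * dl := key1
      _ = (∑ ρ ∈ down l, ∑ ν ∈ (up ρ).erase l, dimSYT ν) + ((down l).card * dl + dl) := by
          rw [key2, hc]
      _ = ((∑ ρ ∈ down l, ∑ ν ∈ (up ρ).erase l, dimSYT ν) + (down l).card * dl) + dl := by
          ring
      _ = l.size * dl + dl := by rw [key3]
      _ = (l.size + 1) * dl := hexp.symm

noncomputable def PN (N : ℕ) : Finset PartitionSeq := (finite_size_eq N).toFinset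

lemma mem_PN {N : ℕ} {μ : PartitionSeq} : μ ∈ PN N ↔ μ.size = N := Set.Finite.mem_toFinset _

lemma PN_zero :
    PN 0 = {(⟨fun _ => 0, fun _ _ _ => le_rfl, ⟨0, fun _ _ => rfl⟩⟩ : PartitionSeq)} := by
  ext μ
  simp only [mem_PN, Finset.mem_singleton]
  constructor
  · intro h
    exact ext' (fun i => size_zero_iff.mp h i)
  · rintro rfl
    exact size_zero_iff.mpr (fun _ => rfl)

lemma sq_sum (N : ℕ) : ∑ μ ∈ PN N, (dimSYT μ)^2 = Nat.factorial N := by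
  induction N with
  | zero =>
    rw [PN_zero, Finset.sum_singleton, dimSYT_empty (size_zero_iff.mpr (fun _ => rfl))]
    simp [Nat.factorial]
  | succ N ihN =>
    have step1 : ∀ μ ∈ PN (N+1), dimSYT μ ^ 2 = ∑ ν ∈ down μ, dimSYT μ * dimSYT ν := by
      intro μ hμ
      rw [pow_two, ← Finset.mul_sum, ← dimSYT_rec (by rw [mem_PN.mp hμ]; omega)]
    calc ∑ μ ∈ PN (N+1), dimSYT μ ^ 2
        = ∑ μ ∈ PN (N+1), ∑ ν ∈ down μ, dimSYT μ * dimSYT ν := Finset.sum_congr rfl step1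
      _ = ∑ ν ∈ PN N, ∑ μ ∈ up ν, dimSYT μ * dimSYT ν := by
          rw [Finset.sum_sigma' (PN (N+1)) (fun μ => down μ) (fun μ ν => dimSYT μ * dimSYT ν),
              Finset.sum_sigma' (PN N) (fun ν => up ν) (fun ν μ => dimSYT μ * dimSYT ν)]
          refine Finset.sum_nbij' (i := fun x => ⟨x.2, x.1⟩) (j := fun x => ⟨x.2, x.1⟩)
            ?_ ?_ ?_ ?_ ?_
          · rintro ⟨μ, ν⟩ hx
            simp only [Finset.mem_sigma] at hx ⊢
            obtain ⟨h1, h2⟩ := hx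
            have hcov := mem_down.mp h2
            have hμs := mem_PN.mp h1
            exact ⟨mem_PN.mpr (by have := hcov.2; omega), mem_up.mpr hcov⟩
          · rintro ⟨ν, μ⟩ hx
            simp only [Finset.mem_sigma] at hx ⊢
            obtain ⟨h1, h2⟩ := hx
            have hcov := mem_up.mp h2
            have hνs := mem_PN.mp h1
            exact ⟨mem_PN.mpr (by have := hcov.2; omega), mem_down.mpr hcov⟩
          · rintro ⟨μ, ν⟩ _; rfl
          · rintro ⟨ν, μ⟩ _; rfl
          · rintro ⟨μ, ν⟩ _; rfl
      _ = ∑ ν ∈ PN N, (N+1) * dimSYT ν ^ 2 := by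
          refine Finset.sum_congr rfl (fun ν hν => ?_)
          rw [← Finset.sum_mul, up_sum ν.size ν rfl, mem_PN.mp hν]
          ring
      _ = (N+1) * Nat.factorial N := by rw [← Finset.mul_sum, ihN]
      _ = Nat.factorial (N+1) := (Nat.factorial_succ N).symm

end PartitionSeq


/-- The sum of `(dim λ)²` over all partitions `λ` of `N` equals `N!`. -/
theorem sum_dim_sq_eq_factorial (N : ℕ) :
    (∑' μ : PartitionSeq, if μ.size = N then (dimSYT μ : ℝ) ^ 2 else 0)
      = (Nat.factorial N : ℝ) := by
  have h1 : (∑' μ : PartitionSeq, if μ.size = N then (dimSYT μ : ℝ) ^ 2 else 0)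
      = ∑ μ ∈ PartitionSeq.PN N, (if μ.size = N then (dimSYT μ : ℝ) ^ 2 else 0) :=
    tsum_eq_sum (fun μ hμ => if_neg (fun h => hμ (PartitionSeq.mem_PN.mpr h)))
  rw [h1, Finset.sum_congr rfl (fun μ hμ => if_pos (PartitionSeq.mem_PN.mp hμ))]
  exact_mod_cast congrArg (fun k : ℕ => (k : ℝ)) (PartitionSeq.sq_sum N)
end

section
/- Let u > 0 and v ∈ ℝ, and let z ∈ ℂ with Im z > 0 satisfy |z| = e^{−u/2} and |z − 1| = e^{−u/4 − v/2}. Then cosh(u/2) − e^{−v}/2 ∈ [−1, 1] and arg z = arccos(cosh(u/2) − e^{−v}/2). -/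
open Filter Topology

/-- If `Im z > 0`, `|z| = e^{-u/2}` and `|z - 1| = e^{-u/4 - v/2}` with
`u > 0`, then `cosh(u/2) - e^{-v}/2 ∈ [-1, 1]` and
`arg z = arccos(cosh(u/2) - e^{-v}/2)`. -/
theorem arg_intersection_point_eq_arccos
    (u v : ℝ) (hu : 0 < u) (z : ℂ) (hz : 0 < z.im)
    (habs : ‖z‖ = Real.exp (-u / 2))
    (habs1 : ‖z - 1‖ = Real.exp (-u / 4 - v / 2)) :
    Real.cosh (u / 2) - Real.exp (-v) / 2 ∈ Set.Icc (-1 : ℝ) 1 ∧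
      Complex.arg z = Real.arccos (Real.cosh (u / 2) - Real.exp (-v) / 2) := by
  have hz0 : z ≠ 0 := by
    intro h; rw [h] at hz; simp at hz
  have h1 : z.re * z.re + z.im * z.im = Real.exp (-u) := by
    have := congrArg (fun x => x ^ 2) habs
    simp only [Complex.sq_norm, Complex.normSq_apply] at this
    rw [this, sq, ← Real.exp_add]; ring_nf
  have h2 : (z.re - 1) * (z.re - 1) + z.im * z.im = Real.exp (-u / 2 - v) := by
    have := congrArg (fun x => x ^ 2) habs1
    simp only [Complex.sq_norm, Complex.normSq_apply, Complex.sub_re, Complex.sub_im,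
      Complex.one_re, Complex.one_im, sub_zero] at this
    rw [this, sq, ← Real.exp_add]; ring_nf
  have hcos : Real.cos (Complex.arg z) = Real.cosh (u / 2) - Real.exp (-v) / 2 := by
    rw [Complex.cos_arg hz0, habs, Real.cosh_eq]
    have e1 : Real.exp (u / 2) * Real.exp (-u / 2) = 1 := by
      rw [← Real.exp_add]; ring_nf; exact Real.exp_zero
    have e2 : Real.exp (-u / 2) * Real.exp (-u / 2) = Real.exp (-u) := by
      rw [← Real.exp_add]; ring_nf
    have e3 : Real.exp (-v) * Real.exp (-u / 2) = Real.exp (-u / 2 - v) := by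
      rw [← Real.exp_add]; ring_nf
    have hep : (0 : ℝ) < Real.exp (-u / 2) := Real.exp_pos _
    field_simp
    simp only [neg_div] at h2 e1 e2 e3 ⊢
    nlinarith [h1, h2, e1, e2, e3]
  refine ⟨⟨?_, ?_⟩, ?_⟩
  · rw [← hcos]; exact Real.neg_one_le_cos _
  · rw [← hcos]; exact Real.cos_le_one _
  · rw [← hcos, Real.arccos_cos (Complex.arg_nonneg_iff.mpr hz.le) (Complex.arg_le_pi z)]
end
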